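/- Let Q be a packing set in ℝ^n. Then its integer hull conv(Q ∩ ℤ^n) is also a packing set: there exist an index set I' and nonnegative (C^i, d_i) for i ∈ I' such that conv(Q ∩ ℤ^n) = {x ∈ ℝ^n : x ≥ 0, C^i x ≤ d_i for all i ∈ I'}. -/

import Mathlib

open Finset

/-- Dot product of two vectors in `ℝ^n`. -/
def dotp {n : ℕ} (c x : Fin n → ℝ) : ℝ := ∑ j, c j * x j

/-- A point of `ℝ^n` is integral if all its coordinates are integers. -/
def isIntPt {n : ℕ} (x : Fin n → ℝ) : Prop := ∀ j, ∃ z : ℤ, x j = (z : ℝ)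

/-- The value `sup { cᵀ x : x ∈ S }`, in the extended reals. -/
noncomputable def supVal {n : ℕ} (c : Fin n → ℝ) (S : Set (Fin n → ℝ)) : EReal :=
  ⨆ x ∈ S, ((dotp c x : ℝ) : EReal)

/-- The value `inf { cᵀ x : x ∈ S }`, in the extended reals. -/
noncomputable def infVal {n : ℕ} (c : Fin n → ℝ) (S : Set (Fin n → ℝ)) : EReal :=
  ⨅ x ∈ S, ((dotp c x : ℝ) : EReal)

/-- The polyhedron `{x ≥ 0 : A x ≤ b}`. -/
def packLP {n m : ℕ} (A : Matrix (Fin m) (Fin n) ℝ) (b : Fin m → ℝ) : Set (Fin n → ℝ) :=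
  {x | (∀ j, 0 ≤ x j) ∧ ∀ i, dotp (A i) x ≤ b i}

/-- Aggregation closure of a packing polyhedron. -/
def aggP {n m : ℕ} (A : Matrix (Fin m) (Fin n) ℝ) (b : Fin m → ℝ) : Set (Fin n → ℝ) :=
  ⋂ lam : {l : Fin m → ℝ // ∀ i, 0 ≤ l i},
    convexHull ℝ {x | (∀ j, 0 ≤ x j) ∧ isIntPt x ∧
      dotp (fun j => ∑ i, lam.1 i * A i j) x ≤ ∑ i, lam.1 i * b i}

/-- 1-row aggregation closure of a packing polyhedron. -/
def oneAggP {n m : ℕ} (A : Matrix (Fin m) (Fin n) ℝ) (b : Fin m → ℝ) : Set (Fin n → ℝ) :=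
  ⋂ i : Fin m, convexHull ℝ {x | (∀ j, 0 ≤ x j) ∧ isIntPt x ∧ dotp (A i) x ≤ b i}

/-- Chvátal–Gomory closure of a set `P ⊆ ℝ^n`. -/
def cgClosure {n : ℕ} (P : Set (Fin n → ℝ)) : Set (Fin n → ℝ) :=
  {x | ∀ (c : Fin n → ℤ) (δ : ℝ),
    (∀ y ∈ P, δ ≤ ∑ j, (c j : ℝ) * y j) → ((⌈δ⌉ : ℤ) : ℝ) ≤ ∑ j, (c j : ℝ) * x j}

/-- 1-row CG closure of a packing polyhedron. -/
def oneCGP {n m : ℕ} (A : Matrix (Fin m) (Fin n) ℝ) (b : Fin m → ℝ) : Set (Fin n → ℝ) :=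
  ⋂ i : Fin m, cgClosure {x | (∀ j, 0 ≤ x j) ∧ dotp (A i) x ≤ b i}

/-- Covering polyhedron with bounds `u j` on coordinates `j ∈ J` (coordinates outside `J`
are unbounded above). -/
def coverLP {n m : ℕ} (A : Matrix (Fin m) (Fin n) ℝ) (b : Fin m → ℝ)
    (J : Finset (Fin n)) (u : Fin n → ℝ) : Set (Fin n → ℝ) :=
  {x | (∀ j, 0 ≤ x j) ∧ (∀ j ∈ J, x j ≤ u j) ∧ ∀ i, b i ≤ dotp (A i) x}

/-- Aggregation closure of a covering polyhedron with bounds. -/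
def aggC {n m : ℕ} (A : Matrix (Fin m) (Fin n) ℝ) (b : Fin m → ℝ)
    (J : Finset (Fin n)) (u : Fin n → ℝ) : Set (Fin n → ℝ) :=
  ⋂ lam : {l : Fin m → ℝ // ∀ i, 0 ≤ l i},
    convexHull ℝ {x | (∀ j, 0 ≤ x j) ∧ isIntPt x ∧ (∀ j ∈ J, x j ≤ u j) ∧
      (∑ i, lam.1 i * b i) ≤ dotp (fun j => ∑ i, lam.1 i * A i j) x}

/-- 1-row aggregation closure of a covering polyhedron with bounds. -/
def oneAggC {n m : ℕ} (A : Matrix (Fin m) (Fin n) ℝ) (b : Fin m → ℝ)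
    (J : Finset (Fin n)) (u : Fin n → ℝ) : Set (Fin n → ℝ) :=
  ⋂ i : Fin m, convexHull ℝ
    {x | (∀ j, 0 ≤ x j) ∧ isIntPt x ∧ (∀ j ∈ J, x j ≤ u j) ∧ b i ≤ dotp (A i) x}

/-- 1-row CG closure of a covering polyhedron with bounds. -/
def oneCGC {n m : ℕ} (A : Matrix (Fin m) (Fin n) ℝ) (b : Fin m → ℝ)
    (J : Finset (Fin n)) (u : Fin n → ℝ) : Set (Fin n → ℝ) :=
  ⋂ i : Fin m, cgClosure {x | (∀ j, 0 ≤ x j) ∧ (∀ j ∈ J, x j ≤ u j) ∧ b i ≤ dotp (A i) x}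

/-- A packing set in `ℝ^n`: a set of the form `{x ≥ 0 : aᵢᵀ x ≤ bᵢ ∀ i ∈ I}` with all the
data nonnegative, where `I` is an arbitrary index set. -/
def IsPackingSet {n : ℕ} (Q : Set (Fin n → ℝ)) : Prop :=
  ∃ (ι : Type) (a : ι → Fin n → ℝ) (β : ι → ℝ),
    (∀ i j, 0 ≤ a i j) ∧ (∀ i, 0 ≤ β i) ∧
    Q = {x | (∀ j, 0 ≤ x j) ∧ ∀ i, dotp (a i) x ≤ β i}

/-- The integer hull `conv(Q ∩ ℤ^n)` of a packing set `Q` is again a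
packing set. -/
lemma dotp_mono' {n : ℕ} {c x y : Fin n → ℝ} (hc : ∀ j, 0 ≤ c j) (hxy : ∀ j, x j ≤ y j) :
    dotp c x ≤ dotp c y :=
  Finset.sum_le_sum fun j _ => mul_le_mul_of_nonneg_left (hxy j) (hc j)

theorem stmt9 {n : ℕ} (Q : Set (Fin n → ℝ)) (hQ : IsPackingSet Q) :
    IsPackingSet (convexHull ℝ {x | x ∈ Q ∧ isIntPt x}) := by
  classical
  obtain ⟨ι₀, a, β, ha, hβ, rfl⟩ := hQ
  set S : Set (Fin n → ℝ) :=
    {x | x ∈ {x : Fin n → ℝ | (∀ j, 0 ≤ x j) ∧ ∀ i, dotp (a i) x ≤ β i} ∧ isIntPt x} with hSdef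
  have hSnn : ∀ z ∈ S, ∀ j, 0 ≤ z j := fun z hz => hz.1.1
  have hSint : ∀ z ∈ S, isIntPt z := fun z hz => hz.2
  have hdown : ∀ z ∈ S, ∀ w : Fin n → ℝ, (∀ j, 0 ≤ w j) → (∀ j, w j ≤ z j) →
      isIntPt w → w ∈ S := by
    rintro z ⟨⟨hz0, hzc⟩, hzint⟩ w hw0 hwz hwint
    exact ⟨⟨hw0, fun i => le_trans (dotp_mono' (ha i) hwz) (hzc i)⟩, hwint⟩
  have hzeroS : (0 : Fin n → ℝ) ∈ S := by
    refine ⟨⟨fun j => le_refl 0, fun i => ?_⟩, fun j => ⟨0, by simp⟩⟩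
    simpa [dotp] using hβ i
  have hbox : ∀ z ∈ S, ∀ w : Fin n → ℝ, (∀ j, 0 ≤ w j) → (∀ j, w j ≤ z j) →
      w ∈ convexHull ℝ S := by
    intro z hz w hw0 hwz
    have hsub : Set.pi Set.univ (fun j => ({0, z j} : Set ℝ)) ⊆ S := by
      intro v hv
      refine hdown z hz v (fun j => ?_) (fun j => ?_) (fun j => ?_)
      · rcases hv j (Set.mem_univ j) with h | h
        · rw [h]
        · rw [Set.mem_singleton_iff.mp h]; exact hSnn z hz j
      · rcases hv j (Set.mem_univ j) with h | h
        · rw [h]; exact hSnn z hz j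
        · rw [Set.mem_singleton_iff.mp h]
      · rcases hv j (Set.mem_univ j) with h | h
        · exact ⟨0, by rw [h]; simp⟩
        · obtain ⟨m, hm⟩ := hSint z hz j
          exact ⟨m, by rw [Set.mem_singleton_iff.mp h]; exact hm⟩
    have hwmem : w ∈ Set.pi Set.univ (fun j => convexHull ℝ ({0, z j} : Set ℝ)) := by
      intro j _
      show w j ∈ convexHull ℝ ({0, z j} : Set ℝ)
      rw [convexHull_pair, segment_eq_Icc (hSnn z hz j)]
      exact ⟨hw0 j, hwz j⟩
    rw [← convexHull_pi] at hwmem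
    exact convexHull_mono hsub hwmem
  set B : Fin n → Prop := fun j => ∃ dd : ℝ, ∀ z ∈ S, z j ≤ dd with hBdef
  obtain ⟨d, hdB⟩ : ∃ d : Fin n → ℝ, ∀ j, B j → ∀ z ∈ S, z j ≤ d j := by
    refine ⟨fun j => if h : B j then h.choose else 0, fun j hj z hz => ?_⟩
    simpa [dif_pos hj] using hj.choose_spec z hz
  have haB : ∀ i j, ¬ B j → a i j = 0 := by
    intro i j hBj
    by_contra hne
    have hpos : 0 < a i j := lt_of_le_of_ne (ha i j) (Ne.symm hne)
    apply hBj
    refine ⟨β i / a i j, fun z hz => ?_⟩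
    have h1 : a i j * z j ≤ dotp (a i) z :=
      Finset.single_le_sum (f := fun j' => a i j' * z j')
        (fun j' _ => mul_nonneg (ha i j') (hSnn z hz j')) (Finset.mem_univ j)
    have h2 : dotp (a i) z ≤ β i := hz.1.2 i
    rw [le_div_iff₀ hpos, mul_comm]
    exact h1.trans h2
  obtain ⟨N₀, hN₀⟩ := exists_nat_ge (∑ j, |d j|)
  have hdN : ∀ j, d j ≤ (N₀ : ℝ) := fun j =>
    le_trans (le_trans (le_abs_self _)
      (Finset.single_le_sum (f := fun j => |d j|) (fun _ _ => abs_nonneg _)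
        (Finset.mem_univ j))) hN₀
  set S2 : Set (Fin n → ℝ) := {z | z ∈ S ∧ ∀ j, z j ≤ (N₀ : ℝ)} with hS2def
  have hS2S : S2 ⊆ S := fun z hz => hz.1
  have hS2fin : S2.Finite := by
    have hsub : S2 ⊆ Set.range (fun (v : Fin n → Fin (N₀ + 1)) => (fun j => ((v j : ℕ) : ℝ))) := by
      rintro z ⟨hzS, hzb⟩
      choose m hm using hSint z hzS
      have hm0 : ∀ j, 0 ≤ m j := by
        intro j
        have h := hSnn z hzS j
        rw [hm j] at h
        exact_mod_cast h
      have hmN : ∀ j, (m j).toNat < N₀ + 1 := by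
        intro j
        have h1 : (m j : ℝ) ≤ (N₀ : ℝ) := by rw [← hm j]; exact hzb j
        have h2 : m j ≤ (N₀ : ℤ) := by exact_mod_cast h1
        omega
      refine ⟨fun j => ⟨(m j).toNat, hmN j⟩, ?_⟩
      funext j
      have h3 : (((m j).toNat : ℤ) : ℝ) = z j := by
        rw [Int.toNat_of_nonneg (hm0 j)]; exact (hm j).symm
      exact_mod_cast h3
    exact Set.Finite.subset (Set.finite_range _) hsub
  have hzeroS2 : (0 : Fin n → ℝ) ∈ S2 := ⟨hzeroS, fun j => by simp⟩
  have hK : IsCompact (convexHull ℝ S2) := hS2fin.isCompact_convexHull ℝ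
  have hKconv : Convex ℝ (convexHull ℝ S2) := convex_convexHull ℝ S2
  have hKclosed : IsClosed (convexHull ℝ S2) := hK.isClosed
  refine ⟨{p : (Fin n → ℝ) × ℝ // (∀ j, 0 ≤ p.1 j) ∧ 0 ≤ p.2 ∧ ∀ z ∈ S, dotp p.1 z ≤ p.2},
    fun p => p.1.1, fun p => p.1.2, fun p => p.2.1, fun p => p.2.2.1, ?_⟩
  apply Set.Subset.antisymm
  · apply convexHull_min
    · exact fun z hz => ⟨hSnn z hz, fun p => p.2.2.2 z hz⟩
    · rintro x ⟨hx0, hxle⟩ y ⟨hy0, hyle⟩ s t hs ht hst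
      constructor
      · intro j
        have hj : (s • x + t • y) j = s * x j + t * y j := by
          simp [smul_eq_mul]
        rw [hj]
        exact add_nonneg (mul_nonneg hs (hx0 j)) (mul_nonneg ht (hy0 j))
      · intro p
        have hlin : dotp p.1.1 (s • x + t • y) = s * dotp p.1.1 x + t * dotp p.1.1 y := by
          unfold dotp
          rw [Finset.mul_sum, Finset.mul_sum, ← Finset.sum_add_distrib]
          apply Finset.sum_congr rfl
          intro j _
          simp [smul_eq_mul]
          ring
        rw [hlin]
        calc s * dotp p.1.1 x + t * dotp p.1.1 y ≤ s * p.1.2 + t * p.1.2 :=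
              add_le_add (mul_le_mul_of_nonneg_left (hxle p) hs)
                (mul_le_mul_of_nonneg_left (hyle p) ht)
        _ = p.1.2 := by rw [← add_mul, hst, one_mul]
  · rintro x ⟨hx0, hxle⟩
    set x' : Fin n → ℝ := fun j => if B j then x j else 0 with hx'def
    have hx'K : x' ∈ convexHull ℝ S2 := by
      by_contra hx'
      obtain ⟨f, u, hfu, hux⟩ := geometric_hahn_banach_closed_point hKconv hKclosed hx'
      obtain ⟨c, hfc⟩ : ∃ c : Fin n → ℝ, ∀ v : Fin n → ℝ, f v = dotp c v := by
        refine ⟨fun j => f (fun j' => if j = j' then 1 else 0), fun v => ?_⟩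
        have h1 := LinearMap.pi_apply_eq_sum_univ (↑f : (Fin n → ℝ) →ₗ[ℝ] ℝ) v
        simp only [ContinuousLinearMap.coe_coe] at h1
        rw [h1]
        unfold dotp
        exact Finset.sum_congr rfl fun j _ => by rw [smul_eq_mul, mul_comm]
      have hu0 : 0 < u := by
        have h0K : (0 : Fin n → ℝ) ∈ convexHull ℝ S2 := subset_convexHull ℝ S2 hzeroS2
        have h := hfu 0 h0K
        rwa [map_zero] at h
      set ct : Fin n → ℝ := fun j => if B j ∧ 0 < c j then c j else 0 with hctdef
      have hct0 : ∀ j, 0 ≤ ct j := by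
        intro j
        by_cases h : B j ∧ 0 < c j
        · simp [ct, h, le_of_lt h.2]
        · simp [ct, h]
      have hctvalid : ∀ z ∈ S, dotp ct z ≤ u := by
        intro z hz
        set zh : Fin n → ℝ := fun j => if B j ∧ 0 < c j then z j else 0 with hzhdef
        have hzhS2 : zh ∈ S2 := by
          constructor
          · apply hdown z hz
            · intro j
              by_cases h : B j ∧ 0 < c j
              · simpa [zh, h] using hSnn z hz j
              · simp [zh, h]
            · intro j
              by_cases h : B j ∧ 0 < c j
              · simp [zh, h]
              · simpa [zh, h] using hSnn z hz j
            · intro j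
              by_cases h : B j ∧ 0 < c j
              · obtain ⟨m, hm⟩ := hSint z hz j
                exact ⟨m, by simp [zh, h, hm]⟩
              · exact ⟨0, by simp [zh, h]⟩
          · intro j
            by_cases h : B j ∧ 0 < c j
            · simp only [zh, if_pos h]
              exact le_trans (hdB j h.1 z hz) (hdN j)
            · simp [zh, h]
        have heq : dotp ct z = dotp c zh := by
          unfold dotp
          apply Finset.sum_congr rfl
          intro j _
          by_cases h : B j ∧ 0 < c j
          · simp [ct, zh, h]
          · simp [ct, zh, h]
        have hlt : dotp c zh < u := by
          rw [← hfc]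
          exact hfu zh (subset_convexHull ℝ S2 hzhS2)
        rw [heq]
        exact le_of_lt hlt
      have hxle' : dotp ct x ≤ u := hxle ⟨(ct, u), hct0, le_of_lt hu0, hctvalid⟩
      have h1 : dotp c x' ≤ dotp ct x' := by
        unfold dotp
        apply Finset.sum_le_sum
        intro j _
        by_cases hB : B j
        · by_cases hc : 0 < c j
          · simp [ct, hB, hc]
          · have hx'j : 0 ≤ x' j := by simp [x', hB]; exact hx0 j
            have hctj : ct j = 0 := by simp [ct]; tauto
            rw [hctj, zero_mul]
            exact mul_nonpos_of_nonpos_of_nonneg (le_of_not_gt hc) hx'j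
        · simp [x', hB]
      have h2 : dotp ct x' = dotp ct x := by
        unfold dotp
        apply Finset.sum_congr rfl
        intro j _
        by_cases hB : B j
        · simp [x', hB]
        · have hctj : ct j = 0 := by simp [ct]; tauto
          rw [hctj, zero_mul, zero_mul]
      have h3 : u < dotp c x' := by
        rw [← hfc]
        exact hux
      linarith
    rw [_root_.convexHull_eq] at hx'K
    obtain ⟨κ, t, w, zf, hw0, hw1, hzf, hcm⟩ := hx'K
    rw [Finset.centerMass_eq_of_sum_1 _ _ hw1] at hcm
    obtain ⟨N₁, hN₁⟩ := exists_nat_ge (∑ j, max (x j) 0)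
    have hxN1 : ∀ j, x j ≤ (N₁ : ℝ) := fun j =>
      le_trans (le_trans (le_max_left _ _)
        (Finset.single_le_sum (f := fun j => max (x j) 0) (fun _ _ => le_max_right _ _)
          (Finset.mem_univ j))) hN₁
    have hwk : ∀ k ∈ t, (fun j => if B j then zf k j else x j) ∈ convexHull ℝ S := by
      intro k hk
      have hzfk := hzf k hk
      set ζ : Fin n → ℝ := fun j => zf k j + (if B j then 0 else (N₁ : ℝ)) with hζdef
      have hζS : ζ ∈ S := by
        refine ⟨⟨fun j => ?_, fun i => ?_⟩, fun j => ?_⟩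
        · apply add_nonneg (hSnn _ hzfk.1 j)
          by_cases hB : B j <;> simp [hB]
        · have heq : dotp (a i) ζ = dotp (a i) (zf k) := by
            unfold dotp
            apply Finset.sum_congr rfl
            intro j _
            by_cases hB : B j
            · simp [ζ, hB]
            · rw [haB i j hB, zero_mul, zero_mul]
          rw [heq]
          exact hzfk.1.1.2 i
        · obtain ⟨m, hm⟩ := hSint _ hzfk.1 j
          by_cases hB : B j
          · exact ⟨m, by simp [ζ, hB, hm]⟩
          · refine ⟨m + N₁, ?_⟩
            simp only [ζ, if_neg hB, hm]
            push_cast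
            ring
      apply hbox ζ hζS
      · intro j
        by_cases hB : B j
        · simpa [hB] using hSnn _ hzfk.1 j
        · simpa [hB] using hx0 j
      · intro j
        by_cases hB : B j
        · simp [ζ, hB]
        · simp only [ζ, if_neg hB]
          have := hSnn _ hzfk.1 j
          have := hxN1 j
          linarith
    have hxeq : x = ∑ k ∈ t, w k • (fun j => if B j then zf k j else x j) := by
      funext j
      rw [Finset.sum_apply]
      by_cases hB : B j
      · have hj := congrFun hcm j
        simp only [Finset.sum_apply, Pi.smul_apply, smul_eq_mul] at hj
        have hx'j : x' j = x j := by simp [x', hB]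
        simp only [Pi.smul_apply, smul_eq_mul, if_pos hB]
        rw [hj, hx'j]
      · simp only [Pi.smul_apply, smul_eq_mul, if_neg hB]
        rw [← Finset.sum_mul, hw1, one_mul]
    rw [hxeq]
    exact (convex_convexHull ℝ S).sum_mem hw0 hw1 hwk
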